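/- Let Q = Q₁Q₂⋯Q_l be a product of positive monomial matrices held by l parties, M = ∑ᵢ Mᵢ, c = ∑ᵢ cᵢ. If y* solves the transformed LP {min (cᵀQ)y : (MQ)y ≤ B, y ≥ 0}, then x* = Qy* = Q₁⋯Q_l y* solves the original LP {min cᵀx : Mx ≤ B, x ≥ 0}. -/

import Mathlib

open Matrix

def IsPosMonomial {n : ℕ} (Q : Matrix (Fin n) (Fin n) ℝ) : Prop :=
  ∃ (σ : Equiv.Perm (Fin n)) (d : Fin n → ℝ), (∀ j, 0 < d j) ∧
    ∀ i j, Q i j = if i = σ j then d j else 0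

lemma posMonomial_one {n : ℕ} : IsPosMonomial (1 : Matrix (Fin n) (Fin n) ℝ) := by
  refine ⟨1, fun _ => 1, fun _ => one_pos, fun i j => ?_⟩
  simp [Matrix.one_apply, eq_comm]
  split_ifs <;> simp_all [Equiv.Perm.mul_apply, Equiv.Perm.one_apply]

lemma posMonomial_mul {n : ℕ} {A B : Matrix (Fin n) (Fin n) ℝ}
    (hA : IsPosMonomial A) (hB : IsPosMonomial B) : IsPosMonomial (A * B) := by
  obtain ⟨σ, d, hd, hAe⟩ := hA
  obtain ⟨τ, e, he, hBe⟩ := hB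
  refine ⟨σ * τ, fun j => d (τ j) * e j, fun j => mul_pos (hd _) (he _), fun i j => ?_⟩
  rw [Matrix.mul_apply]
  rw [Finset.sum_eq_single (τ j)]
  · simp [hAe, hBe]
    split_ifs <;> simp_all [Equiv.Perm.mul_apply, Equiv.Perm.one_apply]
  · intro b _ hb
    simp [hAe, hBe, hb]
  · simp

lemma posMonomial_list_prod {n : ℕ} (L : List (Matrix (Fin n) (Fin n) ℝ))
    (h : ∀ A ∈ L, IsPosMonomial A) : IsPosMonomial L.prod := by
  induction L with
  | nil => simpa using posMonomial_one
  | cons A L ih =>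
    rw [List.prod_cons]
    exact posMonomial_mul (h A (by simp)) (ih fun B hB => h B (by simp [hB]))

lemma posMonomial_mulVec_apply {n : ℕ} {Q : Matrix (Fin n) (Fin n) ℝ}
    (σ : Equiv.Perm (Fin n)) (d : Fin n → ℝ)
    (hQe : ∀ i j, Q i j = if i = σ j then d j else 0) (y : Fin n → ℝ) (i : Fin n) :
    (Q *ᵥ y) i = d (σ.symm i) * y (σ.symm i) := by
  rw [Matrix.mulVec, dotProduct, Finset.sum_eq_single (σ.symm i)]
  · simp [hQe]
  · intro b _ hb
    have : i ≠ σ b := fun h => hb (by simp [h])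
    simp [hQe, this]
  · simp

lemma posMonomial_mulVec_nonneg {n : ℕ} {Q : Matrix (Fin n) (Fin n) ℝ}
    (hQ : IsPosMonomial Q) {y : Fin n → ℝ} (hy : 0 ≤ y) : 0 ≤ Q *ᵥ y := by
  obtain ⟨σ, d, hd, hQe⟩ := hQ
  intro i
  rw [posMonomial_mulVec_apply σ d hQe]
  exact mul_nonneg (hd _).le (hy _)

lemma posMonomial_surj {n : ℕ} {Q : Matrix (Fin n) (Fin n) ℝ}
    (hQ : IsPosMonomial Q) {x : Fin n → ℝ} (hx : 0 ≤ x) :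
    ∃ y : Fin n → ℝ, 0 ≤ y ∧ Q *ᵥ y = x := by
  obtain ⟨σ, d, hd, hQe⟩ := hQ
  refine ⟨fun j => x (σ j) / d j, fun j => div_nonneg (hx _) (hd _).le, ?_⟩
  funext i
  rw [posMonomial_mulVec_apply σ d hQe]
  rw [mul_div_cancel₀ _ (hd _).ne', Equiv.apply_symm_apply]

theorem stmt_19 {l m n : ℕ} (Ms : Fin l → Matrix (Fin m) (Fin n) ℝ)
    (cs : Fin l → (Fin n → ℝ)) (B : Fin m → ℝ)
    (Qs : Fin l → Matrix (Fin n) (Fin n) ℝ)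
    (hQs : ∀ i, IsPosMonomial (Qs i))
    (Q : Matrix (Fin n) (Fin n) ℝ) (hQ : Q = (List.ofFn Qs).prod)
    (M : Matrix (Fin m) (Fin n) ℝ) (hM : M = ∑ i, Ms i)
    (c : Fin n → ℝ) (hc : c = ∑ i, cs i)
    (ystar : Fin n → ℝ)
    (hfeas : (M * Q) *ᵥ ystar ≤ B ∧ 0 ≤ ystar)
    (hopt : ∀ y : Fin n → ℝ, (M * Q) *ᵥ y ≤ B → 0 ≤ y →
      (c ᵥ* Q) ⬝ᵥ ystar ≤ (c ᵥ* Q) ⬝ᵥ y) :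
    (M *ᵥ (Q *ᵥ ystar) ≤ B ∧ 0 ≤ Q *ᵥ ystar) ∧
      ∀ x : Fin n → ℝ, M *ᵥ x ≤ B → 0 ≤ x →
        c ⬝ᵥ (Q *ᵥ ystar) ≤ c ⬝ᵥ x := by
  have hQpm : IsPosMonomial Q := by
    rw [hQ]
    exact posMonomial_list_prod _ (by
      intro A hA
      obtain ⟨i, rfl⟩ := Set.mem_range.mp ((List.mem_ofFn' _ _).mp hA)
      exact hQs i)
  obtain ⟨hfeas1, hfeas2⟩ := hfeas
  refine ⟨⟨by rwa [Matrix.mulVec_mulVec], posMonomial_mulVec_nonneg hQpm hfeas2⟩, ?_⟩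
  intro x hxB hx0
  obtain ⟨y, hy0, hyx⟩ := posMonomial_surj hQpm hx0
  have := hopt y (by rwa [← Matrix.mulVec_mulVec, hyx]) hy0
  calc c ⬝ᵥ (Q *ᵥ ystar) = (c ᵥ* Q) ⬝ᵥ ystar := (Matrix.dotProduct_mulVec _ _ _)
    _ ≤ (c ᵥ* Q) ⬝ᵥ y := this
    _ = c ⬝ᵥ (Q *ᵥ y) := (Matrix.dotProduct_mulVec _ _ _).symm
    _ = c ⬝ᵥ x := by rw [hyx]
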